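/- If G is a finitely generated hyper-FC central group, then the upper FC-series of G stabilizes at some finite ordinal, i.e., there exists n ∈ ℕ with F_n = G. -/

import Mathlib

universe u

/-- The conjugacy class of `g` in `G`. -/
def conjClassSet {G : Type u} [Group G] (g : G) : Set G := {h | ∃ x : G, x * g * x⁻¹ = h}

/-- An FC-element is one with a finite conjugacy class. -/
def IsFCElement {G : Type u} [Group G] (g : G) : Prop := (conjClassSet g).Finite

/-- A group is ICC if every nonidentity element has an infinite conjugacy class. -/
def IsICC (G : Type u) [Group G] : Prop := ∀ g : G, g ≠ 1 → (conjClassSet g).Infinite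

/-- The FC-center of a group: the subgroup of elements with finite conjugacy class. -/
def FCCenter (G : Type u) [Group G] : Subgroup G where
  carrier := {g | IsFCElement g}
  one_mem' := Set.Finite.subset (Set.finite_singleton 1) (by rintro h ⟨x, rfl⟩; simp)
  mul_mem' := by
    intro a b ha hb
    refine ((Set.Finite.image (fun p : G × G => p.1 * p.2) (ha.prod hb)).subset ?_)
    rintro h ⟨x, rfl⟩
    exact ⟨(x * a * x⁻¹, x * b * x⁻¹), ⟨⟨x, rfl⟩, ⟨x, rfl⟩⟩, by group⟩
  inv_mem' := by
    intro a ha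
    refine (ha.image Inv.inv).subset ?_
    rintro h ⟨x, rfl⟩
    exact ⟨x * a * x⁻¹, ⟨x, rfl⟩, by group⟩

instance FCCenter_normal (G : Type u) [Group G] : (FCCenter G).Normal := by
  constructor
  intro n hn g
  refine Set.Finite.subset hn ?_
  rintro h ⟨x, rfl⟩
  exact ⟨x * g, by group⟩

/-- One step of the upper FC-series: the preimage of the FC-center of the quotient. -/
noncomputable def fcStep {G : Type u} [Group G] (F : Subgroup G) : Subgroup G :=
  (FCCenter (G ⧸ Subgroup.normalClosure (F : Set G))).comap
    (QuotientGroup.mk' (Subgroup.normalClosure (F : Set G)))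

instance fcStep_normal {G : Type u} [Group G] (F : Subgroup G) : (fcStep F).Normal :=
  Subgroup.Normal.comap inferInstance _

/-- The (transfinite) upper FC-series of `G`. -/
noncomputable def FCSeries (G : Type u) [Group G] (o : Ordinal.{u}) : Subgroup G :=
  Ordinal.limitRecOn o ⊥ (fun _ F => fcStep F)
    (fun o _ ih => ⨆ a : {a : Ordinal.{u} // a < o}, ih a a.2)

lemma FCSeries_zero (G : Type u) [Group G] : FCSeries G 0 = ⊥ :=
  Ordinal.limitRecOn_zero ..

lemma FCSeries_succ (G : Type u) [Group G] (o : Ordinal.{u}) :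
    FCSeries G (o + 1) = fcStep (FCSeries G o) :=
  Ordinal.limitRecOn_succ ..

lemma FCSeries_limit (G : Type u) [Group G] (o : Ordinal.{u}) (h : Order.IsSuccLimit o) :
    FCSeries G o = ⨆ a : {a : Ordinal.{u} // a < o}, FCSeries G a :=
  Ordinal.limitRecOn_limit _ _ _ _ h

lemma normal_iSup {G : Type u} [Group G] {ι : Sort*} (f : ι → Subgroup G)
    (h : ∀ i, (f i).Normal) : (⨆ i, f i).Normal := by
  constructor
  intro n hn g
  have key : Subgroup.map (MulAut.conj g).toMonoidHom (⨆ i, f i) = ⨆ i, f i := by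
    rw [Subgroup.map_iSup]
    refine iSup_congr fun i => ?_
    ext x
    constructor
    · rintro ⟨y, hy, rfl⟩
      exact (h i).conj_mem y hy g
    · intro hx
      exact ⟨g⁻¹ * x * g, by simpa using (h i).conj_mem x hx g⁻¹, by simp [MulAut.conj]; group⟩
  rw [← key]
  exact ⟨n, hn, rfl⟩

instance FCSeries_normal (G : Type u) [Group G] (o : Ordinal.{u}) : (FCSeries G o).Normal := by
  induction o using Ordinal.limitRecOn with
  | zero => rw [FCSeries_zero]; infer_instance
  | add_one o ih => rw [FCSeries_succ]; infer_instance
  | limit o ho ih => rw [FCSeries_limit G o ho]; exact normal_iSup _ fun a => ih a a.2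

/-- The hyper-FC center of `G`: the stabilized term of the upper FC-series. -/
noncomputable def hyperFCCenter (G : Type u) [Group G] : Subgroup G :=
  ⨆ o : Ordinal.{u}, FCSeries G o

instance hyperFCCenter_normal (G : Type u) [Group G] : (hyperFCCenter G).Normal :=
  normal_iSup _ fun _ => inferInstance

/-- The finitely-indexed upper FC-series. -/
noncomputable def natFCSeries (G : Type u) [Group G] : ℕ → Subgroup G
  | 0 => ⊥
  | n + 1 => fcStep (natFCSeries G n)

section AuxFC

open Subgroup QuotientGroup Function

variable {G₁ : Type*} {G₂ : Type*} {G₃ : Type*} [Group G₁] [Group G₂] [Group G₃]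

lemma IsFCElement.push {φ : G₁ →* G₂} (hφ : Surjective φ) {x : G₁} (hx : IsFCElement x) :
    IsFCElement (φ x) := by
  apply (hx.image φ).subset
  rintro _ ⟨y, rfl⟩
  obtain ⟨z, rfl⟩ := hφ y
  exact ⟨z * x * z⁻¹, ⟨z, rfl⟩, by simp [mul_assoc]⟩

lemma isFC_of_ker_le {φ : G₁ →* G₂} {ψ : G₁ →* G₃} (hφ : Surjective φ) (hψ : Surjective ψ)
    (hker : φ.ker ≤ ψ.ker) {x : G₁} (hx : IsFCElement (φ x)) : IsFCElement (ψ x) := by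
  let χ : G₂ →* G₃ :=
    φ.liftOfRightInverse (surjInv hφ) (rightInverse_surjInv hφ) ⟨ψ, hker⟩
  have hcomm : ∀ a, χ (φ a) = ψ a := fun a =>
    φ.liftOfRightInverse_comp_apply (surjInv hφ) (rightInverse_surjInv hφ) ⟨ψ, hker⟩ a
  have hχ : Surjective χ := by
    intro c; obtain ⟨a, rfl⟩ := hψ c; exact ⟨φ a, hcomm a⟩
  have := hx.push hχ
  rwa [hcomm] at this

lemma isFC_of_finiteIndex_centralizer (x : G₁)
    (h : (Subgroup.centralizer ({x} : Set G₁)).FiniteIndex) : IsFCElement x := by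
  haveI := h
  set C := Subgroup.centralizer ({x} : Set G₁) with hC
  have hfin : Finite (G₁ ⧸ C) := inferInstance
  apply (Set.finite_range (fun q : G₁ ⧸ C => q.out * x * q.out⁻¹)).subset
  rintro _ ⟨g, rfl⟩
  refine ⟨QuotientGroup.mk g, ?_⟩
  have hmem : g⁻¹ * (QuotientGroup.mk g : G₁ ⧸ C).out ∈ C := by
    rw [← QuotientGroup.eq]
    exact (QuotientGroup.out_eq' (QuotientGroup.mk g : G₁ ⧸ C)).symm
  set c := g⁻¹ * (QuotientGroup.mk g : G₁ ⧸ C).out with hc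
  have hout : (QuotientGroup.mk g : G₁ ⧸ C).out = g * c := by rw [hc]; group
  have hcx : x * c = c * x := Subgroup.mem_centralizer_iff.mp hmem x rfl
  show (QuotientGroup.mk g : G₁ ⧸ C).out * x * ((QuotientGroup.mk g : G₁ ⧸ C).out)⁻¹
      = g * x * g⁻¹
  rw [hout]
  have hconj : c * x * c⁻¹ = x := by rw [← hcx]; group
  calc g * c * x * (g * c)⁻¹ = g * (c * x * c⁻¹) * g⁻¹ := by group
    _ = g * x * g⁻¹ := by rw [hconj]

lemma finiteIndex_centralizer_of_isFC (x : G₁) (hx : IsFCElement x) :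
    (Subgroup.centralizer ({x} : Set G₁)).FiniteIndex := by
  set C := Subgroup.centralizer ({x} : Set G₁) with hC
  haveI : Finite (conjClassSet x) := hx.to_subtype
  have hinj : Function.Injective
      (fun q : G₁ ⧸ C => (⟨q.out * x * q.out⁻¹, ⟨q.out, rfl⟩⟩ : conjClassSet x)) := by
    intro p q hpq
    have h' : p.out * x * p.out⁻¹ = q.out * x * q.out⁻¹ := congrArg Subtype.val hpq
    have hmem : p.out⁻¹ * q.out ∈ C := by
      refine Subgroup.mem_centralizer_iff.mpr ?_
      intro y hy
      rw [Set.mem_singleton_iff] at hy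
      rw [hy]
      have : x * (p.out⁻¹ * q.out) = p.out⁻¹ * (p.out * x * p.out⁻¹) * q.out := by group
      rw [this, h']
      group
    have h2 := QuotientGroup.eq.mpr hmem
    rwa [QuotientGroup.out_eq' p, QuotientGroup.out_eq' q] at h2
  haveI : Finite (G₁ ⧸ C) := Finite.of_injective _ hinj
  exact C.finiteIndex_of_finite_quotient

end AuxFC
section AuxSeries

open Subgroup QuotientGroup Function

variable {G : Type u} [Group G] {H : Type u} [Group H]

lemma surjective_monoidHom_comp {A B C : Type*} [Group A] [Group B] [Group C]
    {f : B →* C} {g : A →* B} (hf : Surjective f) (hg : Surjective g) :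
    Surjective ⇑(f.comp g) := by
  rw [MonoidHom.coe_comp]
  exact hf.comp hg

lemma le_fcStep (F : Subgroup G) : F ≤ fcStep F := by
  intro x hx
  show IsFCElement (QuotientGroup.mk' (Subgroup.normalClosure (F : Set G)) x)
  have hx' : x ∈ (QuotientGroup.mk' (Subgroup.normalClosure (F : Set G))).ker := by
    rw [QuotientGroup.ker_mk']
    exact Subgroup.le_normalClosure hx
  rw [MonoidHom.mem_ker] at hx'
  rw [hx']
  exact (FCCenter _).one_mem

lemma fcStep_le_of_map_le (φ : G →* H) (hφ : Surjective φ) {F : Subgroup G} {F' : Subgroup H}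
    (hFF' : Subgroup.map φ F ≤ F') : Subgroup.map φ (fcStep F) ≤ fcStep F' := by
  rintro _ ⟨x, hx, rfl⟩
  have hker : (QuotientGroup.mk' (Subgroup.normalClosure (F : Set G))).ker ≤
      ((QuotientGroup.mk' (Subgroup.normalClosure (F' : Set H))).comp φ).ker := by
    rw [QuotientGroup.ker_mk', ← MonoidHom.comap_ker, QuotientGroup.ker_mk',
      ← Subgroup.map_le_iff_le_comap, Subgroup.map_normalClosure _ _ hφ]
    refine Subgroup.normalClosure_le_normal ?_
    refine subset_trans ?_ Subgroup.subset_normalClosure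
    rw [← Subgroup.coe_map]
    exact hFF'
  show IsFCElement (QuotientGroup.mk' (Subgroup.normalClosure (F' : Set H)) (φ x))
  exact isFC_of_ker_le (ψ := (QuotientGroup.mk' (Subgroup.normalClosure (F' : Set H))).comp φ)
    (QuotientGroup.mk'_surjective _)
    (surjective_monoidHom_comp (QuotientGroup.mk'_surjective _) hφ) hker hx

lemma FCSeries_mono (G : Type u) [Group G] :
    ∀ {α β : Ordinal.{u}}, α ≤ β → FCSeries G α ≤ FCSeries G β := by
  intro α β
  induction β using Ordinal.induction generalizing α with
  | h β IH =>
    intro hαβ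
    rcases Ordinal.zero_or_succ_or_isSuccLimit β with h0 | ⟨δ, hδ⟩ | hlim
    · subst h0
      rw [nonpos_iff_eq_zero] at hαβ
      subst hαβ
      exact le_rfl
    · subst hδ
      rcases hαβ.lt_or_eq with hlt | rfl
      · rw [Order.lt_succ_iff] at hlt
        rw [← Ordinal.add_one_eq_succ, FCSeries_succ]
        exact le_trans (IH δ (Order.lt_succ δ) hlt) (le_fcStep _)
      · exact le_rfl
    · rcases hαβ.lt_or_eq with hlt | rfl
      · rw [FCSeries_limit G β hlim]
        exact le_iSup_of_le ⟨α, hlt⟩ le_rfl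
      · exact le_rfl

lemma map_FCSeries_le (φ : G →* H) (hφ : Surjective φ) (o : Ordinal.{u}) :
    Subgroup.map φ (FCSeries G o) ≤ FCSeries H o := by
  induction o using Ordinal.limitRecOn with
  | zero =>
    rw [FCSeries_zero, FCSeries_zero, Subgroup.map_bot]
  | add_one o ih =>
    rw [FCSeries_succ, FCSeries_succ]
    exact fcStep_le_of_map_le φ hφ ih
  | limit o ho ih =>
    rw [FCSeries_limit G o ho, FCSeries_limit H o ho, Subgroup.map_iSup]
    exact iSup_mono fun a => ih a a.2

lemma FCSeries_top_of_surjective (φ : G →* H) (hφ : Surjective φ) {o : Ordinal.{u}}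
    (h : FCSeries G o = ⊤) : FCSeries H o = ⊤ := by
  have h2 := map_FCSeries_le φ hφ o
  rw [h, Subgroup.map_top_of_surjective φ hφ] at h2
  exact top_unique h2

lemma mem_FCSeries_one {x : G} (hx : IsFCElement x) : x ∈ FCSeries G 1 := by
  have h1 : (1 : Ordinal.{u}) = 0 + 1 := (zero_add 1).symm
  rw [h1, FCSeries_succ]
  show IsFCElement (QuotientGroup.mk' _ x)
  exact hx.push (QuotientGroup.mk'_surjective _)

lemma FCSeries_add_eq (G : Type u) [Group G] (μ : Ordinal.{u}) (α : Ordinal.{u}) :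
    FCSeries G (μ + α) =
      Subgroup.comap (QuotientGroup.mk' (FCSeries G μ)) (FCSeries (G ⧸ FCSeries G μ) α) := by
  induction α using Ordinal.limitRecOn with
  | zero =>
    rw [add_zero, FCSeries_zero, MonoidHom.comap_bot, QuotientGroup.ker_mk']
  | add_one α ih =>
    rw [← add_assoc, FCSeries_succ, FCSeries_succ, ih]
    set N := FCSeries G μ
    set Fq := FCSeries (G ⧸ N) α with hFq
    set M := Subgroup.comap (QuotientGroup.mk' N) Fq with hM
    haveI : M.Normal := Subgroup.Normal.comap inferInstance _
    have hkerM : (QuotientGroup.mk' (Subgroup.normalClosure (M : Set G))).ker = M := by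
      rw [QuotientGroup.ker_mk', Subgroup.normalClosure_eq_self]
    have hkerC : ((QuotientGroup.mk' (Subgroup.normalClosure (Fq : Set (G ⧸ N)))).comp
        (QuotientGroup.mk' N)).ker = M := by
      rw [← MonoidHom.comap_ker, QuotientGroup.ker_mk', Subgroup.normalClosure_eq_self]
    ext x
    constructor
    · intro hx
      show IsFCElement (QuotientGroup.mk' _ (QuotientGroup.mk' N x))
      exact isFC_of_ker_le
        (ψ := (QuotientGroup.mk' (Subgroup.normalClosure (Fq : Set (G ⧸ N)))).comp
          (QuotientGroup.mk' N))
        (QuotientGroup.mk'_surjective _)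
        (surjective_monoidHom_comp (QuotientGroup.mk'_surjective _)
          (QuotientGroup.mk'_surjective _))
        (le_of_eq (hkerM.trans hkerC.symm)) hx
    · intro hx
      show IsFCElement (QuotientGroup.mk' (Subgroup.normalClosure (M : Set G)) x)
      exact isFC_of_ker_le
        (φ := (QuotientGroup.mk' (Subgroup.normalClosure (Fq : Set (G ⧸ N)))).comp
          (QuotientGroup.mk' N))
        (surjective_monoidHom_comp (QuotientGroup.mk'_surjective _)
          (QuotientGroup.mk'_surjective _))
        (QuotientGroup.mk'_surjective _)
        (le_of_eq (hkerC.trans hkerM.symm)) hx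
  | limit α hα ih =>
    have hlim : Order.IsSuccLimit (μ + α) := Ordinal.isSuccLimit_add μ hα
    haveI hne : Nonempty {a : Ordinal.{u} // a < α} := ⟨⟨0, hα.pos⟩⟩
    rw [FCSeries_limit _ _ hlim, FCSeries_limit _ _ hα]
    apply le_antisymm
    · refine iSup_le ?_
      rintro ⟨b, hb⟩
      rcases le_or_gt b μ with hbμ | hμb
      · refine le_trans (FCSeries_mono G hbμ) ?_
        intro x hx
        rw [Subgroup.mem_comap]
        have hx1 : QuotientGroup.mk' (FCSeries G μ) x = 1 := by
          rw [← MonoidHom.mem_ker, QuotientGroup.ker_mk']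
          exact hx
        rw [hx1]
        exact Subgroup.one_mem _
      · have heq : μ + (b - μ) = b := Ordinal.add_sub_cancel_of_le hμb.le
        have hlt : b - μ < α := by
          rw [← add_lt_add_iff_left μ, heq]
          exact hb
        have hbeq : FCSeries G b =
            Subgroup.comap (QuotientGroup.mk' (FCSeries G μ))
              (FCSeries (G ⧸ FCSeries G μ) (b - μ)) := by
          conv_lhs => rw [← heq]
          exact ih (b - μ) hlt
        rw [hbeq]
        exact Subgroup.comap_mono (le_iSup_of_le ⟨b - μ, hlt⟩ le_rfl)
    · intro x hx
      rw [Subgroup.mem_comap] at hx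
      have hdir : Directed (· ≤ ·)
          (fun a : {a : Ordinal.{u} // a < α} => FCSeries (G ⧸ FCSeries G μ) a) := by
        rintro a b
        exact ⟨⟨max a.1 b.1, max_lt a.2 b.2⟩, FCSeries_mono _ (le_max_left _ _),
          FCSeries_mono _ (le_max_right _ _)⟩
      rw [Subgroup.mem_iSup_of_directed hdir] at hx
      obtain ⟨⟨a, ha⟩, hxa⟩ := hx
      have hmemx : x ∈ FCSeries G (μ + a) := by
        rw [ih a ha]
        exact hxa
      exact Subgroup.mem_iSup_of_mem ⟨μ + a, by rwa [add_lt_add_iff_left]⟩ hmemx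

lemma finset_subset_FCSeries_of_limit {o : Ordinal.{u}} (ho : Order.IsSuccLimit o) (T : Finset G)
    (hT : (↑T : Set G) ⊆ FCSeries G o) : ∃ a, a < o ∧ (↑T : Set G) ⊆ FCSeries G a := by
  classical
  haveI hne : Nonempty {a : Ordinal.{u} // a < o} := ⟨⟨0, ho.pos⟩⟩
  induction T using Finset.induction with
  | empty => exact ⟨0, ho.pos, by simp⟩
  | @insert t T htT ih =>
    have hT' : (↑T : Set G) ⊆ FCSeries G o := by
      refine subset_trans ?_ hT
      rw [Finset.coe_insert]
      exact Set.subset_insert _ _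
    obtain ⟨a, ha, hTa⟩ := ih hT'
    have ht : t ∈ FCSeries G o := hT (by simp)
    have hdir : Directed (· ≤ ·)
        (fun a : {a : Ordinal.{u} // a < o} => FCSeries G a) := by
      rintro a b
      exact ⟨⟨max a.1 b.1, max_lt a.2 b.2⟩, FCSeries_mono _ (le_max_left _ _),
        FCSeries_mono _ (le_max_right _ _)⟩
    rw [FCSeries_limit G o ho, Subgroup.mem_iSup_of_directed hdir] at ht
    obtain ⟨⟨b, hb⟩, htb⟩ := ht
    refine ⟨max a b, max_lt ha hb, ?_⟩
    rw [Finset.coe_insert, Set.insert_subset_iff]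
    exact ⟨FCSeries_mono G (le_max_right a b) htb,
      subset_trans hTa (FCSeries_mono G (le_max_left a b))⟩

end AuxSeries
section KeyStep

open Subgroup QuotientGroup Function

lemma key_step {G : Type u} [Group G] (hfg : Group.FG G) (N : Subgroup G) [N.Normal]
    {ι : Type*} [Finite ι] (x : ι → G) (hx : ∀ i, IsFCElement (QuotientGroup.mk' N (x i))) :
    ∃ T : Finset G, (↑T : Set G) ⊆ N ∧
      (↑T : Set G) ⊆ Subgroup.normalClosure (Set.range x) ∧
      ∀ i, IsFCElement (QuotientGroup.mk' (Subgroup.normalClosure (↑T : Set G)) (x i)) := by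
  classical
  haveI := hfg
  haveI := Fintype.ofFinite ι
  set C : ι → Subgroup G := fun i =>
    (Subgroup.centralizer {QuotientGroup.mk' N (x i)}).comap (QuotientGroup.mk' N) with hC
  have hCfi : ∀ i, (C i).FiniteIndex := by
    intro i
    have h1 := finiteIndex_centralizer_of_isFC _ (hx i)
    constructor
    rw [hC]
    rw [Subgroup.index_comap_of_surjective _ (QuotientGroup.mk'_surjective N)]
    exact h1.index_ne_zero
  haveI hWfi : (⨅ i, C i).FiniteIndex := Subgroup.finiteIndex_iInf hCfi
  set W := ⨅ i, C i with hW
  have hWFG : W.FG := (Group.fg_iff_subgroup_fg W).mp inferInstance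
  obtain ⟨S, hSW⟩ := hWFG
  have hSsub : (↑S : Set G) ⊆ (W : Set G) := by
    rw [← hSW]
    exact Subgroup.subset_closure
  set T : Finset G := (S ×ˢ (Finset.univ : Finset ι)).image
    (fun p => p.1 * x p.2 * p.1⁻¹ * (x p.2)⁻¹) with hT
  have hTmem : ∀ t ∈ T, ∃ w ∈ S, ∃ i : ι, t = w * x i * w⁻¹ * (x i)⁻¹ := by
    intro t ht
    rw [hT, Finset.mem_image] at ht
    obtain ⟨⟨w, i⟩, hp, rfl⟩ := ht
    rw [Finset.mem_product] at hp
    exact ⟨w, hp.1, i, rfl⟩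
  have hcomm : ∀ w, w ∈ W → ∀ i, QuotientGroup.mk' N (x i) * QuotientGroup.mk' N w
      = QuotientGroup.mk' N w * QuotientGroup.mk' N (x i) := by
    intro w hw i
    rw [hW, Subgroup.mem_iInf] at hw
    have h2 := hw i
    rw [hC, Subgroup.mem_comap] at h2
    exact Subgroup.mem_centralizer_iff.mp h2 _ rfl
  refine ⟨T, ?_, ?_, ?_⟩
  · intro t ht
    obtain ⟨w, hwS, i, rfl⟩ := hTmem t ht
    have h1 := hcomm w (hSsub hwS) i
    rw [SetLike.mem_coe, ← QuotientGroup.ker_mk' N, MonoidHom.mem_ker]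
    have h2 : QuotientGroup.mk' N (w * x i * w⁻¹ * (x i)⁻¹)
        = QuotientGroup.mk' N w * QuotientGroup.mk' N (x i) * (QuotientGroup.mk' N w)⁻¹
          * (QuotientGroup.mk' N (x i))⁻¹ := by
      simp [map_mul, map_inv]
    rw [h2, ← h1]
    group
  · intro t ht
    obtain ⟨w, hwS, i, rfl⟩ := hTmem t ht
    have h1 : x i ∈ Subgroup.normalClosure (Set.range x) :=
      Subgroup.subset_normalClosure ⟨i, rfl⟩
    have h2 : w * x i * w⁻¹ ∈ Subgroup.normalClosure (Set.range x) :=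
      Subgroup.Normal.conj_mem inferInstance _ h1 w
    rw [SetLike.mem_coe, show w * x i * w⁻¹ * (x i)⁻¹ = (w * x i * w⁻¹) * (x i)⁻¹ from rfl]
    exact Subgroup.mul_mem _ h2 (Subgroup.inv_mem _ h1)
  · intro i
    set K := Subgroup.normalClosure (↑T : Set G) with hK
    set ψ := QuotientGroup.mk' K with hψ
    have hWcent : W ≤ (Subgroup.centralizer {ψ (x i)}).comap ψ := by
      rw [← hSW, Subgroup.closure_le]
      intro w hwS
      rw [SetLike.mem_coe, Subgroup.mem_comap, Subgroup.mem_centralizer_iff]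
      intro y hy
      rw [Set.mem_singleton_iff] at hy
      rw [hy]
      have hTK : w * x i * w⁻¹ * (x i)⁻¹ ∈ K := by
        apply Subgroup.subset_normalClosure
        rw [Finset.mem_coe, hT, Finset.mem_image]
        exact ⟨⟨w, i⟩, Finset.mem_product.mpr ⟨hwS, Finset.mem_univ i⟩, rfl⟩
      have h1 : ψ (w * x i * w⁻¹ * (x i)⁻¹) = 1 := by
        rw [hψ, ← MonoidHom.mem_ker, QuotientGroup.ker_mk']
        exact hTK
      have h2 : ψ w * ψ (x i) * (ψ w)⁻¹ * (ψ (x i))⁻¹ = 1 := by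
        simpa [map_mul, map_inv] using h1
      have h4 : ψ w * ψ (x i) * (ψ w)⁻¹ = ψ (x i) := mul_inv_eq_one.mp h2
      calc ψ (x i) * ψ w = (ψ w * ψ (x i) * (ψ w)⁻¹) * ψ w := by rw [h4]
        _ = ψ w * ψ (x i) := by group
    have hfi : (Subgroup.centralizer {ψ (x i)}).FiniteIndex := by
      have hdvd := Subgroup.index_dvd_of_le hWcent
      have hcomap := Subgroup.index_comap_of_surjective
        (H := Subgroup.centralizer {ψ (x i)}) (QuotientGroup.mk'_surjective K)
      constructor
      intro h0
      rw [← hcomap] at h0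
      rw [h0] at hdvd
      exact hWfi.index_ne_zero (zero_dvd_iff.mp hdvd)
    exact isFC_of_finiteIndex_centralizer _ hfi

end KeyStep
section Ladder

open Subgroup QuotientGroup Function

lemma one_add_natCast_ord (n : ℕ) : (1 : Ordinal.{u}) + (n : Ordinal.{u}) = (n : Ordinal.{u}) + 1 := by
  rw [← Nat.cast_one (R := Ordinal.{u}), ← Nat.cast_add, ← Nat.cast_add, Nat.add_comm]

lemma isFC_mk'_of_mem_fcStep {G : Type u} [Group G] {F : Subgroup G} [F.Normal] {g : G}
    (hg : g ∈ fcStep F) : IsFCElement (QuotientGroup.mk' F g) := by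
  refine isFC_of_ker_le (QuotientGroup.mk'_surjective _) (QuotientGroup.mk'_surjective _)
    (le_of_eq ?_) hg
  rw [QuotientGroup.ker_mk', QuotientGroup.ker_mk', Subgroup.normalClosure_eq_self]

lemma ladder {G : Type u} [Group G] (hfg : Group.FG G) :
    ∀ (n : ℕ) (lam : Ordinal.{u}), FCSeries G (lam + (n : Ordinal.{u}) + 1) = ⊤ →
    ∃ T : Finset G, (↑T : Set G) ⊆ FCSeries G lam ∧
      FCSeries (G ⧸ Subgroup.normalClosure (↑T : Set G)) (((n + 1 : ℕ)) : Ordinal.{u}) = ⊤ := by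
  intro n
  induction n with
  | zero =>
    intro lam h
    rw [Nat.cast_zero, add_zero, FCSeries_succ] at h
    set N := FCSeries G lam with hN
    obtain ⟨S, hSgen⟩ := hfg.out
    have hfc : ∀ s : {a // a ∈ S}, IsFCElement (QuotientGroup.mk' N ((s : G))) := by
      intro s
      refine isFC_mk'_of_mem_fcStep ?_
      rw [h]
      exact Subgroup.mem_top _
    obtain ⟨T, hTN, -, hTfc⟩ := key_step hfg N (fun s : {a // a ∈ S} => (s : G)) hfc
    refine ⟨T, hTN, ?_⟩
    set K := Subgroup.normalClosure (↑T : Set G) with hK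
    have hone : (((0 + 1 : ℕ)) : Ordinal.{u}) = (1 : Ordinal.{u}) := by norm_num
    rw [hone]
    have hgen : Subgroup.closure (QuotientGroup.mk' K '' ↑S) = ⊤ := by
      rw [← MonoidHom.map_closure, hSgen]
      exact Subgroup.map_top_of_surjective _ (QuotientGroup.mk'_surjective K)
    rw [eq_top_iff, ← hgen, Subgroup.closure_le]
    rintro _ ⟨s, hs, rfl⟩
    exact mem_FCSeries_one (hTfc ⟨s, hs⟩)
  | succ n ih =>
    intro lam h
    have harith : lam + ((n + 1 : ℕ) : Ordinal.{u}) + 1 = lam + 1 + (n : Ordinal.{u}) + 1 := by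
      rw [Nat.cast_succ, add_assoc lam 1 (n : Ordinal.{u}), one_add_natCast_ord n]
    rw [harith] at h
    obtain ⟨T', hT'sub, hT'top⟩ := ih (lam + 1) h
    set K' := Subgroup.normalClosure (↑T' : Set G) with hK'
    have hfc : ∀ t : {a // a ∈ T'}, IsFCElement (QuotientGroup.mk' (FCSeries G lam) ((t : G))) := by
      intro t
      refine isFC_mk'_of_mem_fcStep ?_
      rw [← FCSeries_succ]
      exact hT'sub t.2
    obtain ⟨T, hTN, hTsub2, hTfc⟩ := key_step hfg (FCSeries G lam)
      (fun t : {a // a ∈ T'} => (t : G)) hfc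
    have hrange : Set.range (fun t : {a // a ∈ T'} => (t : G)) = (↑T' : Set G) := by
      ext g
      simp
    refine ⟨T, hTN, ?_⟩
    set K := Subgroup.normalClosure (↑T : Set G) with hK
    set Q := G ⧸ K with hQ
    set F1 := FCSeries Q 1 with hF1
    -- K' image is inside F1
    have hK'F1 : Subgroup.map (QuotientGroup.mk' K) K' ≤ F1 := by
      rw [hK', Subgroup.map_normalClosure _ _ (QuotientGroup.mk'_surjective K)]
      refine Subgroup.normalClosure_le_normal ?_
      rintro _ ⟨t, ht, rfl⟩
      exact mem_FCSeries_one (hTfc ⟨t, ht⟩)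
    -- surjection G ⧸ K' →* Q ⧸ F1
    let π : G →* Q ⧸ F1 := (QuotientGroup.mk' F1).comp (QuotientGroup.mk' K)
    have hπker : K' ≤ π.ker := by
      intro k hk
      rw [MonoidHom.mem_ker]
      show QuotientGroup.mk' F1 (QuotientGroup.mk' K k) = 1
      rw [← MonoidHom.mem_ker, QuotientGroup.ker_mk']
      exact hK'F1 ⟨k, hk, rfl⟩
    let χ := QuotientGroup.lift K' π hπker
    have hfact : ∀ g : G, χ (QuotientGroup.mk g) = π g := fun g =>
      QuotientGroup.lift_mk' (φ := π) K' hπker g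
    have hχ : Surjective χ := by
      intro q
      obtain ⟨g, hg⟩ := surjective_monoidHom_comp (QuotientGroup.mk'_surjective F1)
        (QuotientGroup.mk'_surjective K) q
      exact ⟨QuotientGroup.mk g, by rw [hfact g]; exact hg⟩
    have htop2 : FCSeries (Q ⧸ F1) (((n + 1 : ℕ)) : Ordinal.{u}) = ⊤ :=
      FCSeries_top_of_surjective χ hχ hT'top
    have htop3 : FCSeries Q ((1 : Ordinal.{u}) + ((n + 1 : ℕ) : Ordinal.{u})) = ⊤ := by
      rw [FCSeries_add_eq Q 1, htop2, Subgroup.comap_top]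
    have harith2 : (1 : Ordinal.{u}) + ((n + 1 : ℕ) : Ordinal.{u})
        = (((n + 1) + 1 : ℕ) : Ordinal.{u}) := by
      rw [one_add_natCast_ord (n + 1)]
      norm_cast
    rw [harith2] at htop3
    exact htop3

lemma add_nat_lt_of_limit {lam a : Ordinal.{u}} (hlim : Order.IsSuccLimit lam) (ha : a < lam) (n : ℕ) :
    a + (n : Ordinal.{u}) < lam := by
  induction n with
  | zero => simpa using ha
  | succ n ihn =>
    rw [Nat.cast_succ, ← add_assoc, Ordinal.add_one_eq_succ]
    exact hlim.succ_lt ihn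

lemma stabilize {G : Type u} [Group G] (hfg : Group.FG G) :
    ∀ lam : Ordinal.{u}, ∀ n : ℕ, FCSeries G (lam + (n : Ordinal.{u}) + 1) = ⊤ →
      ∃ m : ℕ, FCSeries G ((m : ℕ) : Ordinal.{u}) = ⊤ := by
  intro lam
  induction lam using Ordinal.induction with
  | h lam IH =>
    intro n h
    rcases Ordinal.zero_or_succ_or_isSuccLimit lam with h0 | ⟨δ, hδ⟩ | hlim
    · subst h0
      refine ⟨n + 1, ?_⟩
      rw [Nat.cast_succ]
      rw [zero_add] at h
      exact h
    · subst hδ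
      have harith : Order.succ δ + (n : Ordinal.{u}) + 1
          = δ + ((n + 1 : ℕ) : Ordinal.{u}) + 1 := by
        rw [← Ordinal.add_one_eq_succ, Nat.cast_succ, add_assoc δ 1 (n : Ordinal.{u}),
          one_add_natCast_ord n]
      rw [harith] at h
      exact IH δ (by rw [← Ordinal.add_one_eq_succ]; exact Order.lt_succ δ) (n + 1) h
    · obtain ⟨T, hTsub, hTtop⟩ := ladder hfg n lam h
      obtain ⟨a, ha, hTa⟩ := finset_subset_FCSeries_of_limit hlim T hTsub
      set K := Subgroup.normalClosure (↑T : Set G) with hK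
      have hKa : K ≤ FCSeries G a := Subgroup.normalClosure_le_normal hTa
      let π : G →* G ⧸ FCSeries G a := QuotientGroup.mk' _
      have hπ : K ≤ π.ker := by rw [QuotientGroup.ker_mk']; exact hKa
      let χ := QuotientGroup.lift K π hπ
      have hfact : ∀ g : G, χ (QuotientGroup.mk g) = π g := fun g =>
        QuotientGroup.lift_mk' (φ := π) K hπ g
      have hχ : Surjective χ := by
        intro q
        obtain ⟨g, hg⟩ := QuotientGroup.mk'_surjective (FCSeries G a) q
        exact ⟨QuotientGroup.mk g, by rw [hfact g]; exact hg⟩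
      have htop2 : FCSeries (G ⧸ FCSeries G a) (((n + 1 : ℕ)) : Ordinal.{u}) = ⊤ :=
        FCSeries_top_of_surjective χ hχ hTtop
      have htop3 : FCSeries G (a + ((n + 1 : ℕ) : Ordinal.{u})) = ⊤ := by
        rw [FCSeries_add_eq G a, htop2, Subgroup.comap_top]
      have harith : a + ((n + 1 : ℕ) : Ordinal.{u})
          = a + (n : Ordinal.{u}) + 1 := by
        rw [Nat.cast_succ, ← add_assoc]
      rw [harith] at htop3
      refine IH (a + (n : Ordinal.{u})) (add_nat_lt_of_limit hlim ha n) 0 ?_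
      rw [Nat.cast_zero, add_zero]
      exact htop3

end Ladder
/-- For a finitely generated hyper-FC central group, the upper FC-series stabilizes at a
finite ordinal. -/
theorem fg_hyperFC_central_finite_rank (G : Type u) [Group G] (hfg : Group.FG G)
    (h : ∃ γ : Ordinal.{u}, FCSeries G γ = ⊤) :
    ∃ n : ℕ, FCSeries G (n : Ordinal.{u}) = ⊤ := by
  obtain ⟨γ, hγ⟩ := h
  induction γ using Ordinal.induction with
  | h γ IH =>
    rcases Ordinal.zero_or_succ_or_isSuccLimit γ with h0 | ⟨β, hβ⟩ | hlim
    · subst h0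
      exact ⟨0, by simpa using hγ⟩
    · subst hβ
      have h' : FCSeries G (β + ((0 : ℕ) : Ordinal.{u}) + 1) = ⊤ := by
        rw [Nat.cast_zero, add_zero, Ordinal.add_one_eq_succ]
        exact hγ
      exact stabilize hfg β 0 h'
    · obtain ⟨S, hSgen⟩ := hfg.out
      have hsub : (↑S : Set G) ⊆ FCSeries G γ := by
        rw [hγ]
        exact fun g _ => Subgroup.mem_top g
      obtain ⟨a, ha, hSa⟩ := finset_subset_FCSeries_of_limit hlim S hsub
      have htop : FCSeries G a = ⊤ := by
        rw [eq_top_iff, ← hSgen]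
        exact (Subgroup.closure_le (FCSeries G a)).mpr hSa
      exact IH a ha htop
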